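/- arXiv:2002.02654 — 2 statements merged into one kernel-verified Lean document; each statement's English description precedes it below -/
import Mathlib

section
/- Let $I : \mathcal{M}_1(S^1) \to [0,\infty]$ be defined by $I(\mu) = \frac12 \int_{S^1} |\phi'(\zeta)|^2\,d\zeta$ if $\mu = \phi^2(\zeta)\,d\zeta$ with $\phi$ absolutely continuous (i.e. $\phi = \sqrt{d\mu/d\zeta} \in W^{1,2}(S^1)$), and $I(\mu) = \infty$ otherwise. Then $I$ is convex: for probability measures $\mu, \nu$ on $S^1$ and $\lambda \in [0,1]$, $I(\lambda\mu + (1-\lambda)\nu) \le \lambda I(\mu) + (1-\lambda) I(\nu)$. -/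
open Real MeasureTheory ENNReal

/-- `φ` is the (nonnegative, absolutely continuous) square root of the density of `μ`
with respect to arclength measure on the circle, identified with `[0, 2π)`, and `ψ` is
its (square-integrable) derivative. -/
def IsSqrtDensity (μ : Measure ℝ) (φ ψ : ℝ → ℝ) : Prop :=
  Function.Periodic φ (2 * Real.pi) ∧ Function.Periodic ψ (2 * Real.pi) ∧
  (∀ x, 0 ≤ φ x) ∧
  (∀ x : ℝ, φ x = φ 0 + ∫ y in (0:ℝ)..x, ψ y) ∧
  IntervalIntegrable ψ volume 0 (2 * Real.pi) ∧
  IntervalIntegrable (fun x => (ψ x) ^ 2) volume 0 (2 * Real.pi) ∧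
  μ = (volume.restrict (Set.Ioc (0:ℝ) (2 * Real.pi))).withDensity
        (fun x => ENNReal.ofReal ((φ x) ^ 2))

/-- The Donsker–Varadhan rate function `I(μ) = ½ ∫ |φ'|²` if `μ = φ² dζ` with
`φ = √(dμ/dζ)` absolutely continuous in `W^{1,2}`, and `∞` otherwise. -/
noncomputable def rateI (μ : Measure ℝ) : ℝ≥0∞ :=
  sInf {E : ℝ≥0∞ | ∃ φ ψ : ℝ → ℝ, IsSqrtDensity μ φ ψ ∧
    E = ENNReal.ofReal ((1 / 2) * ∫ x in (0:ℝ)..(2 * Real.pi), (ψ x) ^ 2)}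

set_option maxHeartbeats 1000000

section AuxLemmas
open Set

lemma periodic_intervalIntegrable {f : ℝ → ℝ} {T : ℝ} (hT : 0 < T)
    (hp : Function.Periodic f T) (h : IntervalIntegrable f volume 0 T) :
    ∀ a b : ℝ, IntervalIntegrable f volume a b := by
  have h1 : ∀ n : ℤ, IntervalIntegrable f volume (n * T) (n * T + T) := by
    intro n
    have h2 := h.comp_add_right ((-n : ℤ) * T)
    have hfun : (fun x => f (x + (-n : ℤ) * T)) = f := funext fun x => (hp.int_mul (-n)) x
    rw [hfun] at h2
    have e1 : (0 : ℝ) - ((-n : ℤ) : ℝ) * T = n * T := by push_cast; ring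
    have e2 : T - ((-n : ℤ) : ℝ) * T = n * T + T := by push_cast; ring
    rwa [e1, e2] at h2
  have h2 : ∀ n : ℕ, IntervalIntegrable f volume (-(n * T)) (n * T) := by
    intro n
    induction n with
    | zero => simpa using (h1 0).mono_set (by simp)
    | succ n ih =>
      have hl := h1 (-(n+1))
      have hr := h1 n
      have e1 : ((-((n:ℤ)+1) : ℤ) : ℝ) * T = -(((n+1 : ℕ) : ℝ) * T) := by push_cast; ring
      have e2 : ((-((n:ℤ)+1) : ℤ) : ℝ) * T + T = -(((n : ℕ) : ℝ) * T) := by push_cast; ring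
      have e3 : (((n:ℤ)) : ℝ) * T = ((n : ℕ) : ℝ) * T := by push_cast; ring
      have e4 : (((n:ℤ)) : ℝ) * T + T = ((n+1 : ℕ) : ℝ) * T := by push_cast; ring
      rw [e2, e1] at hl
      rw [e4, e3] at hr
      exact (hl.trans ih).trans hr
  intro a b
  obtain ⟨n, hn⟩ := exists_nat_gt (max |a| |b| / T)
  have hn' : max |a| |b| ≤ n * T := by
    rw [div_lt_iff₀ hT] at hn
    linarith
  have ha := abs_le.mp (le_trans (le_max_left |a| |b|) hn')
  have hb := abs_le.mp (le_trans (le_max_right |a| |b|) hn')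
  refine (h2 n).mono_set ?_
  have h3 : ((-(n * T) : ℝ)) ≤ n * T := by linarith [abs_nonneg a, le_trans (le_max_left |a| |b|) hn']
  rw [Set.uIcc_of_le h3]
  exact Set.uIcc_subset_Icc ⟨ha.1, ha.2⟩ ⟨hb.1, hb.2⟩

lemma aesm_of_II {f : ℝ → ℝ} (h : ∀ a b : ℝ, IntervalIntegrable f volume a b) :
    AEStronglyMeasurable f volume := by
  have hu : (⋃ n : ℕ, Set.Ioc (-(n:ℝ)) n) = Set.univ := by
    ext x
    simp only [Set.mem_iUnion, Set.mem_univ, iff_true, Set.mem_Ioc]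
    obtain ⟨n, hn⟩ := exists_nat_gt |x|
    obtain ⟨h1, h2⟩ := abs_lt.mp hn
    exact ⟨n, by linarith, by linarith⟩
  have h2 := aestronglyMeasurable_iUnion_iff.mpr
    (fun n : ℕ => ((h (-(n:ℝ)) n).1.aestronglyMeasurable))
  rwa [hu, Measure.restrict_univ] at h2

lemma isSqrtDensity_combo {μ ν : Measure ℝ} {lam : ℝ} (h0 : 0 ≤ lam) (h1 : lam ≤ 1)
    {φ ψ χ ω : ℝ → ℝ} (hμ : IsSqrtDensity μ φ ψ) (hν : IsSqrtDensity ν χ ω) :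
    ∃ σ τ : ℝ → ℝ, IsSqrtDensity (ENNReal.ofReal lam • μ + ENNReal.ofReal (1 - lam) • ν) σ τ ∧
      (∫ x in (0:ℝ)..(2 * Real.pi), (τ x) ^ 2) ≤
        lam * (∫ x in (0:ℝ)..(2 * Real.pi), (ψ x) ^ 2) +
        (1 - lam) * (∫ x in (0:ℝ)..(2 * Real.pi), (ω x) ^ 2) := by
  obtain ⟨pφ, pψ, hφ0, hFφ, hIψ, hIψ2, hμeq⟩ := hμ
  obtain ⟨pχ, pω, hχ0, hFχ, hIω, hIω2, hνeq⟩ := hν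
  have h1' : 0 ≤ 1 - lam := by linarith
  have hT : 0 < 2 * Real.pi := by positivity
  -- global interval integrability
  have hψall : ∀ a b : ℝ, IntervalIntegrable ψ volume a b :=
    periodic_intervalIntegrable hT pψ hIψ
  have hωall : ∀ a b : ℝ, IntervalIntegrable ω volume a b :=
    periodic_intervalIntegrable hT pω hIω
  set q : ℝ → ℝ := fun t => lam * ψ t ^ 2 + (1 - lam) * ω t ^ 2 with hq_def
  have hq0 : ∀ t, 0 ≤ q t := fun t =>
    add_nonneg (mul_nonneg h0 (sq_nonneg _)) (mul_nonneg h1' (sq_nonneg _))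
  have pq : Function.Periodic q (2 * Real.pi) := fun x => by simp only [hq_def, pψ x, pω x]
  have hqall : ∀ a b : ℝ, IntervalIntegrable q volume a b :=
    periodic_intervalIntegrable hT pq ((hIψ2.const_mul lam).add (hIω2.const_mul (1 - lam)))
  set h : ℝ → ℝ := fun t => Real.sqrt (q t) with hh_def
  have hh0 : ∀ t, 0 ≤ h t := fun t => Real.sqrt_nonneg _
  have hh2 : ∀ t, h t ^ 2 = q t := fun t => Real.sq_sqrt (hq0 t)
  have ph : Function.Periodic h (2 * Real.pi) := fun x => by simp only [hh_def, pq x]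
  have hψm : AEStronglyMeasurable ψ volume := aesm_of_II hψall
  have hωm : AEStronglyMeasurable ω volume := aesm_of_II hωall
  have hψ2m : AEStronglyMeasurable (fun t => ψ t ^ 2) volume := by
    have := hψm.mul hψm; simp only [pow_two]; exact this
  have hω2m : AEStronglyMeasurable (fun t => ω t ^ 2) volume := by
    have := hωm.mul hωm; simp only [pow_two]; exact this
  have hqm : AEStronglyMeasurable q volume :=
    (hψ2m.const_mul lam).add (hω2m.const_mul (1 - lam))
  have hhm : AEStronglyMeasurable h volume :=
    Real.continuous_sqrt.comp_aestronglyMeasurable hqm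
  have hhall : ∀ a b : ℝ, IntervalIntegrable h volume a b := by
    refine periodic_intervalIntegrable hT ph ?_
    refine ((intervalIntegrable_const (c := (1:ℝ))).add (hqall 0 _)).mono_fun'
      (hhm.restrict) (ae_of_all _ fun t => ?_)
    have h2 := hh2 t
    have h3 := hh0 t
    have h4 := hq0 t
    show ‖h t‖ ≤ 1 + q t
    rw [Real.norm_eq_abs, abs_of_nonneg h3]
    nlinarith [sq_nonneg (h t - 1)]
  -- continuity
  have φc : Continuous φ := by
    have : φ = fun x => φ 0 + ∫ t in (0:ℝ)..x, ψ t := funext hFφ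
    rw [this]
    exact continuous_const.add (intervalIntegral.continuous_primitive hψall 0)
  have χc : Continuous χ := by
    have : χ = fun x => χ 0 + ∫ t in (0:ℝ)..x, ω t := funext hFχ
    rw [this]
    exact continuous_const.add (intervalIntegral.continuous_primitive hωall 0)
  set A : ℝ → ℝ := fun x => ∫ t in (0:ℝ)..x, h t with hA_def
  have Ac : Continuous A := intervalIntegral.continuous_primitive hhall 0
  set f : ℝ → ℝ := fun x => lam * φ x ^ 2 + (1 - lam) * χ x ^ 2 with hf_def
  have hf0 : ∀ x, 0 ≤ f x := fun x =>
    add_nonneg (mul_nonneg h0 (sq_nonneg _)) (mul_nonneg h1' (sq_nonneg _))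
  set σ : ℝ → ℝ := fun x => Real.sqrt (f x) with hσ_def
  have σ0 : ∀ x, 0 ≤ σ x := fun x => Real.sqrt_nonneg _
  have hσ2 : ∀ x, σ x ^ 2 = f x := fun x => Real.sq_sqrt (hf0 x)
  have σc : Continuous σ := Real.continuous_sqrt.comp (by fun_prop)
  have pσ : Function.Periodic σ (2 * Real.pi) := fun x => by
    simp only [hσ_def, hf_def, pφ x, pχ x]
  -- difference of A
  have hAdiff : ∀ y x : ℝ, A x - A y = ∫ t in y..x, h t := fun y x =>
    intervalIntegral.integral_interval_sub_left (hhall 0 x) (hhall 0 y)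
  have hφdiff : ∀ y x : ℝ, φ x - φ y = ∫ t in y..x, ψ t := by
    intro y x
    rw [hFφ x, hFφ y, add_sub_add_left_eq_sub]
    exact intervalIntegral.integral_interval_sub_left (hψall 0 x) (hψall 0 y)
  have hχdiff : ∀ y x : ℝ, χ x - χ y = ∫ t in y..x, ω t := by
    intro y x
    rw [hFχ x, hFχ y, add_sub_add_left_eq_sub]
    exact intervalIntegral.integral_interval_sub_left (hωall 0 x) (hωall 0 y)
  -- the key Lipschitz-type estimate
  have hkey : ∀ y x : ℝ, y ≤ x → |σ x - σ y| ≤ A x - A y := by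
    intro y x hyx
    set p : ℝ := φ x - φ y with hp_def
    set s : ℝ := χ x - χ y with hs_def
    -- claim 1 : (σ x - σ y)^2 ≤ lam * p^2 + (1-lam) * s^2
    have hCS : (lam * (φ x * φ y) + (1 - lam) * (χ x * χ y)) ^ 2 ≤ f x * f y := by
      simp only [hf_def]
      nlinarith [mul_nonneg (mul_nonneg h0 h1') (sq_nonneg (φ x * χ y - χ x * φ y))]
    have hrhs0 : 0 ≤ lam * (φ x * φ y) + (1 - lam) * (χ x * χ y) :=
      add_nonneg (mul_nonneg h0 (mul_nonneg (hφ0 x) (hφ0 y)))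
        (mul_nonneg h1' (mul_nonneg (hχ0 x) (hχ0 y)))
    have hprod : lam * (φ x * φ y) + (1 - lam) * (χ x * χ y) ≤ σ x * σ y := by
      have h4 : σ x * σ y = Real.sqrt (f x * f y) := (Real.sqrt_mul (hf0 x) _).symm
      rw [h4]
      calc lam * (φ x * φ y) + (1 - lam) * (χ x * χ y)
          = Real.sqrt ((lam * (φ x * φ y) + (1 - lam) * (χ x * χ y)) ^ 2) :=
            (Real.sqrt_sq hrhs0).symm
        _ ≤ Real.sqrt (f x * f y) := Real.sqrt_le_sqrt hCS
    have claim1 : (σ x - σ y) ^ 2 ≤ lam * p ^ 2 + (1 - lam) * s ^ 2 := by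
      have e1 := hσ2 x
      have e2 := hσ2 y
      simp only [hp_def, hs_def, hf_def] at *
      nlinarith [hprod]
    -- claim 2 : sqrt (lam p² + (1-lam) s²) ≤ ∫ h over [y,x]
    have claim2 : Real.sqrt (lam * p ^ 2 + (1 - lam) * s ^ 2) ≤ ∫ t in y..x, h t := by
      set r : ℝ := Real.sqrt (lam * p ^ 2 + (1 - lam) * s ^ 2) with hr_def
      have hr0 : 0 ≤ r := Real.sqrt_nonneg _
      have hr2 : r ^ 2 = lam * p ^ 2 + (1 - lam) * s ^ 2 :=
        Real.sq_sqrt (add_nonneg (mul_nonneg h0 (sq_nonneg _)) (mul_nonneg h1' (sq_nonneg _)))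
      rcases eq_or_lt_of_le hr0 with hr | hr
      · rw [← hr]
        exact intervalIntegral.integral_nonneg hyx fun t _ => hh0 t
      · have hrne : r ≠ 0 := ne_of_gt hr
        set c : ℝ := p / r with hc_def
        set d : ℝ := s / r with hd_def
        have hcd : lam * c ^ 2 + (1 - lam) * d ^ 2 = 1 := by
          rw [hc_def, hd_def, div_pow, div_pow, ← mul_div_assoc, ← mul_div_assoc,
            ← add_div, ← hr2, div_self (pow_ne_zero 2 hrne)]
        have hpt : ∀ t, lam * c * ψ t + (1 - lam) * d * ω t ≤ h t := by
          intro t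
          have e1 := hh2 t
          have e2 := hh0 t
          have eCS : (lam * c * ψ t + (1 - lam) * d * ω t) ^ 2 ≤ h t ^ 2 := by
            rw [e1]
            have expand : (lam * c ^ 2 + (1 - lam) * d ^ 2) * q t
                - (lam * c * ψ t + (1 - lam) * d * ω t) ^ 2
                = lam * (1 - lam) * (c * ω t - d * ψ t) ^ 2 := by
              simp only [hq_def]; ring
            nlinarith [mul_nonneg (mul_nonneg h0 h1') (sq_nonneg (c * ω t - d * ψ t)), hcd]
          nlinarith [eCS, e2, sq_nonneg (lam * c * ψ t + (1 - lam) * d * ω t - h t)]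
        have hint : r = ∫ t in y..x, (lam * c * ψ t + (1 - lam) * d * ω t) := by
          rw [intervalIntegral.integral_add (((hψall y x).const_mul _))
            (((hωall y x).const_mul _)), intervalIntegral.integral_const_mul,
            intervalIntegral.integral_const_mul, ← hφdiff y x, ← hχdiff y x, ← hp_def, ← hs_def]
          rw [hc_def, hd_def]
          have e : lam * (p / r) * p + (1 - lam) * (s / r) * s = r ^ 2 / r := by rw [hr2]; ring
          have e2 : r ^ 2 / r = r := by rw [pow_two, mul_div_assoc, div_self hrne, mul_one]
          linarith [e, e2]
        rw [hint]
        exact intervalIntegral.integral_mono_on hyx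
          (((hψall y x).const_mul _).add ((hωall y x).const_mul _)) (hhall y x)
          (fun t _ => hpt t)
    have habs : |σ x - σ y| = Real.sqrt ((σ x - σ y) ^ 2) := (Real.sqrt_sq_eq_abs _).symm
    rw [habs, hAdiff y x]
    exact le_trans (Real.sqrt_le_sqrt claim1) claim2
  -- monotone envelopes
  have hmono_p : Monotone (fun x => A x + σ x) := by
    intro a b hab
    have h2 := abs_le.mp (hkey a b hab)
    dsimp only
    linarith [h2.1, h2.2]
  have hmono_m : Monotone (fun x => A x - σ x) := by
    intro a b hab
    have h2 := abs_le.mp (hkey a b hab)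
    dsimp only
    linarith [h2.1, h2.2]
  set Sp : StieltjesFunction ℝ :=
    { toFun := fun x => A x + σ x
      mono' := hmono_p
      right_continuous' := fun x => ((Ac.add σc).continuousAt).continuousWithinAt } with hSp_def
  set Sm : StieltjesFunction ℝ :=
    { toFun := fun x => A x - σ x
      mono' := hmono_m
      right_continuous' := fun x => ((Ac.sub σc).continuousAt).continuousWithinAt } with hSm_def
  have hSp_app : ∀ x, Sp x = A x + σ x := fun _ => rfl
  have hSm_app : ∀ x, Sm x = A x - σ x := fun _ => rfl
  set dp : ℝ → ℝ := fun x => (Sp.measure.rnDeriv volume x).toReal with hdp_def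
  set dm : ℝ → ℝ := fun x => (Sm.measure.rnDeriv volume x).toReal with hdm_def
  set τ : ℝ → ℝ := deriv σ with hτ_def
  have hτae : ∀ᵐ x, HasDerivAt σ ((dp x - dm x) / 2) x := by
    filter_upwards [Sp.ae_hasDerivAt, Sm.ae_hasDerivAt] with x h₁ h₂
    have h3 := (h₁.sub h₂).div_const 2
    have e : (fun y => ((Sp : ℝ → ℝ) - Sm) y / 2) = σ := funext fun y => by
      rw [Pi.sub_apply, hSp_app, hSm_app]; ring
    rwa [e] at h3
  have hτeq : ∀ᵐ x, τ x = (dp x - dm x) / 2 := by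
    filter_upwards [hτae] with x hx using hx.deriv
  -- the sum measure is absolutely continuous with density 2h
  have hmeas : Sp.measure + Sm.measure
      = volume.withDensity (fun x => ENNReal.ofReal (2 * h x)) := by
    refine MeasureTheory.Measure.ext_of_Ioc' _ _ (fun a b hab => ?_) (fun a b hab => ?_)
    · rw [Measure.add_apply, Sp.measure_Ioc, Sm.measure_Ioc]
      exact ENNReal.add_ne_top.2 ⟨ENNReal.ofReal_ne_top, ENNReal.ofReal_ne_top⟩
    · rw [Measure.add_apply, Sp.measure_Ioc, Sm.measure_Ioc,
        withDensity_apply _ measurableSet_Ioc]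
      have hint : IntegrableOn (fun t => 2 * h t) (Ioc a b) volume :=
        (hhall a b).1.const_mul 2
      rw [← ofReal_integral_eq_lintegral_ofReal hint
        (ae_of_all _ fun t => by show (0:ℝ) ≤ 2 * h t; linarith [hh0 t])]
      have hI2 : (∫ t in Ioc a b, 2 * h t) = 2 * (A b - A a) := by
        rw [← intervalIntegral.integral_of_le hab.le, intervalIntegral.integral_const_mul,
          ← hAdiff a b]
      rw [hI2, hSp_app, hSp_app, hSm_app, hSm_app,
        ← ENNReal.ofReal_add (by linarith [abs_le.mp (hkey a b hab.le)])
          (by linarith [abs_le.mp (hkey a b hab.le)])]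
      congr 1
      ring
  have hACp : Sp.measure ≪ volume := by
    refine Measure.AbsolutelyContinuous.mk fun s _ h0s => ?_
    have h2 : (Sp.measure + Sm.measure) s = 0 := by
      rw [hmeas]; exact withDensity_absolutelyContinuous volume _ h0s
    rw [Measure.add_apply] at h2
    exact (add_eq_zero.mp h2).1
  have hACm : Sm.measure ≪ volume := by
    refine Measure.AbsolutelyContinuous.mk fun s _ h0s => ?_
    have h2 : (Sp.measure + Sm.measure) s = 0 := by
      rw [hmeas]; exact withDensity_absolutelyContinuous volume _ h0s
    rw [Measure.add_apply] at h2
    exact (add_eq_zero.mp h2).2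
  have hDm : AEMeasurable (fun x => ENNReal.ofReal (2 * h x)) volume :=
    ENNReal.measurable_ofReal.comp_aemeasurable ((hhm.aemeasurable).const_mul 2)
  have hrn : (Sp.measure + Sm.measure).rnDeriv volume
      =ᵐ[volume] fun x => ENNReal.ofReal (2 * h x) := by
    rw [hmeas]; exact Measure.rnDeriv_withDensity₀ volume hDm
  have hsum : ∀ᵐ x, dp x + dm x = 2 * h x := by
    filter_upwards [hrn, Measure.rnDeriv_add' Sp.measure Sm.measure volume,
      Measure.rnDeriv_lt_top Sp.measure volume, Measure.rnDeriv_lt_top Sm.measure volume]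
      with x h₁ h₂ h₃ h₄
    have h5 : Sp.measure.rnDeriv volume x + Sm.measure.rnDeriv volume x
        = ENNReal.ofReal (2 * h x) := by
      rw [← h₁, h₂]; rfl
    have h6 : dp x + dm x
        = ((Sp.measure.rnDeriv volume x) + (Sm.measure.rnDeriv volume x)).toReal :=
      (ENNReal.toReal_add h₃.ne h₄.ne).symm
    rw [h6, h5, ENNReal.toReal_ofReal (by linarith [hh0 x])]
  have hbound : ∀ᵐ x, |τ x| ≤ h x := by
    filter_upwards [hτeq, hsum] with x h₁ h₂
    have d1 : (0:ℝ) ≤ dp x := ENNReal.toReal_nonneg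
    have d2 : (0:ℝ) ≤ dm x := ENNReal.toReal_nonneg
    rw [h₁, abs_le]
    constructor <;> [linarith; linarith]
  -- integrability of the rnDeriv densities
  have hInt_p : ∀ a b : ℝ, IntegrableOn dp (Ioc a b) volume := by
    intro a b
    refine integrable_toReal_of_lintegral_ne_top
      ((Measure.measurable_rnDeriv _ _).aemeasurable.restrict) ?_
    exact ((Measure.setLIntegral_rnDeriv_le (μ := Sp.measure) (ν := volume) (Ioc a b)).trans_lt
      (by rw [Sp.measure_Ioc]; exact ENNReal.ofReal_lt_top)).ne
  have hInt_m : ∀ a b : ℝ, IntegrableOn dm (Ioc a b) volume := by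
    intro a b
    refine integrable_toReal_of_lintegral_ne_top
      ((Measure.measurable_rnDeriv _ _).aemeasurable.restrict) ?_
    exact ((Measure.setLIntegral_rnDeriv_le (μ := Sm.measure) (ν := volume) (Ioc a b)).trans_lt
      (by rw [Sm.measure_Ioc]; exact ENNReal.ofReal_lt_top)).ne
  -- FTC for σ
  have hFTC : ∀ a b : ℝ, a ≤ b → ∫ t in a..b, τ t = σ b - σ a := by
    intro a b hab
    have hip : IntervalIntegrable dp volume a b :=
      (intervalIntegrable_iff_integrableOn_Ioc_of_le hab).2 (hInt_p a b)
    have him : IntervalIntegrable dm volume a b :=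
      (intervalIntegrable_iff_integrableOn_Ioc_of_le hab).2 (hInt_m a b)
    have e1 : ∫ t in a..b, dp t = Sp b - Sp a := by
      rw [intervalIntegral.integral_of_le hab, hdp_def,
        Measure.setIntegral_toReal_rnDeriv hACp, measureReal_def, Sp.measure_Ioc,
        ENNReal.toReal_ofReal (sub_nonneg.2 (Sp.mono hab))]
    have e2 : ∫ t in a..b, dm t = Sm b - Sm a := by
      rw [intervalIntegral.integral_of_le hab, hdm_def,
        Measure.setIntegral_toReal_rnDeriv hACm, measureReal_def, Sm.measure_Ioc,
        ENNReal.toReal_ofReal (sub_nonneg.2 (Sm.mono hab))]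
    have e3 : ∫ t in a..b, τ t = ((∫ t in a..b, dp t) - ∫ t in a..b, dm t) / 2 := by
      rw [← intervalIntegral.integral_sub hip him]
      have e4 : ∫ t in a..b, (dp t - dm t) / 2
          = (∫ t in a..b, (dp t - dm t)) / 2 := intervalIntegral.integral_div 2 _
      rw [← e4]
      apply intervalIntegral.integral_congr_ae
      filter_upwards [hτeq] with t ht _
      exact ht
    rw [e3, e1, e2, hSp_app, hSp_app, hSm_app, hSm_app]
    ring
  have hFTCσ : ∀ x : ℝ, σ x = σ 0 + ∫ t in (0:ℝ)..x, τ t := by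
    intro x
    rcases le_total 0 x with hx | hx
    · rw [hFTC 0 x hx]; ring
    · rw [intervalIntegral.integral_symm, hFTC x 0 hx]; ring
  -- periodicity of τ
  have pτ : Function.Periodic τ (2 * Real.pi) := by
    intro x
    have e : (fun y => σ (y + 2 * Real.pi)) = σ := funext fun y => pσ y
    have e2 : τ (x + 2 * Real.pi) = deriv (fun y => σ (y + 2 * Real.pi)) x := by
      rw [hτ_def, deriv_comp_add_const]
    rw [e2, e]
  -- integrability of τ and τ²
  have hτm : AEStronglyMeasurable τ volume := (measurable_deriv σ).aestronglyMeasurable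
  have hτI : IntervalIntegrable τ volume 0 (2 * Real.pi) := by
    refine (hhall 0 _).mono_fun' (hτm.restrict) ?_
    refine ae_restrict_of_ae ?_
    filter_upwards [hbound] with x hx
    rwa [Real.norm_eq_abs]
  have hτ2m : AEStronglyMeasurable (fun x => τ x ^ 2) volume :=
    ((measurable_deriv σ).pow_const 2).aestronglyMeasurable
  have hτ2bound : ∀ᵐ x, τ x ^ 2 ≤ q x := by
    filter_upwards [hbound] with x hx
    nlinarith [sq_abs (τ x), hh2 x, hh0 x, abs_nonneg (τ x)]
  have hτ2I : IntervalIntegrable (fun x => τ x ^ 2) volume 0 (2 * Real.pi) := by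
    refine (hqall 0 _).mono_fun' (hτ2m.restrict) ?_
    refine ae_restrict_of_ae ?_
    filter_upwards [hτ2bound] with x hx
    rw [Real.norm_eq_abs, abs_of_nonneg (sq_nonneg _)]
    exact hx
  -- the integral inequality
  have hτ2le : (∫ x in (0:ℝ)..(2 * Real.pi), τ x ^ 2) ≤
      lam * (∫ x in (0:ℝ)..(2 * Real.pi), ψ x ^ 2) +
      (1 - lam) * (∫ x in (0:ℝ)..(2 * Real.pi), ω x ^ 2) := by
    have step : (∫ x in (0:ℝ)..(2 * Real.pi), τ x ^ 2) ≤ ∫ x in (0:ℝ)..(2 * Real.pi), q x :=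
      intervalIntegral.integral_mono_ae hT.le hτ2I (hqall 0 _) hτ2bound
    have eq2 : (∫ x in (0:ℝ)..(2 * Real.pi), q x)
        = lam * (∫ x in (0:ℝ)..(2 * Real.pi), ψ x ^ 2) +
          (1 - lam) * (∫ x in (0:ℝ)..(2 * Real.pi), ω x ^ 2) := by
      simp only [hq_def]
      rw [intervalIntegral.integral_add (hIψ2.const_mul lam) (hIω2.const_mul (1 - lam)),
        intervalIntegral.integral_const_mul, intervalIntegral.integral_const_mul]
    linarith [step, eq2.le]
  -- the measure identity
  have hφ2m : Measurable (fun x => ENNReal.ofReal (φ x ^ 2)) :=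
    ENNReal.measurable_ofReal.comp ((φc.pow 2).measurable)
  have hχ2m : Measurable (fun x => ENNReal.ofReal (χ x ^ 2)) :=
    ENNReal.measurable_ofReal.comp ((χc.pow 2).measurable)
  have hcomb : ENNReal.ofReal lam • μ + ENNReal.ofReal (1 - lam) • ν
      = (volume.restrict (Set.Ioc (0:ℝ) (2 * Real.pi))).withDensity
          (fun x => ENNReal.ofReal (σ x ^ 2)) := by
    rw [hμeq, hνeq, ← withDensity_smul _ hφ2m, ← withDensity_smul _ hχ2m,
      ← withDensity_add_left (hφ2m.const_smul (ENNReal.ofReal lam))]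
    congr 1
    funext x
    simp only [Pi.add_apply, Pi.smul_apply, smul_eq_mul]
    rw [← ENNReal.ofReal_mul h0, ← ENNReal.ofReal_mul h1',
      ← ENNReal.ofReal_add (mul_nonneg h0 (sq_nonneg _)) (mul_nonneg h1' (sq_nonneg _)),
      hσ2 x]
  exact ⟨σ, τ, ⟨pσ, pτ, σ0, hFTCσ, hτI, hτ2I, hcomb⟩, hτ2le⟩

end AuxLemmas

open Set in
/-- The rate function `I` is convex on probability measures on the circle. -/
theorem rateI_convex (μ ν : Measure ℝ) (hμ : IsProbabilityMeasure μ)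
    (hν : IsProbabilityMeasure ν) (lam : ℝ) (h0 : 0 ≤ lam) (h1 : lam ≤ 1) :
    rateI (ENNReal.ofReal lam • μ + ENNReal.ofReal (1 - lam) • ν) ≤
      ENNReal.ofReal lam * rateI μ + ENNReal.ofReal (1 - lam) * rateI ν := by
  have hT : 0 < 2 * Real.pi := by positivity
  have h1' : 0 ≤ 1 - lam := by linarith
  rcases eq_or_lt_of_le h0 with hl0 | hl0
  · simp only [← hl0, ENNReal.ofReal_zero, zero_smul, zero_add, sub_zero, ENNReal.ofReal_one,
      one_smul, zero_mul, one_mul]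
    exact le_rfl
  rcases eq_or_lt_of_le h1 with hl1 | hl1
  · simp only [hl1, sub_self, ENNReal.ofReal_zero, zero_smul, add_zero, ENNReal.ofReal_one,
      one_smul, zero_mul, one_mul]
    exact le_rfl
  have hc0 : ENNReal.ofReal lam ≠ 0 := by
    simp only [ne_eq, ENNReal.ofReal_eq_zero, not_le]; exact hl0
  have hct : ENNReal.ofReal lam ≠ ⊤ := ENNReal.ofReal_ne_top
  have hc0' : ENNReal.ofReal (1 - lam) ≠ 0 := by
    simp only [ne_eq, ENNReal.ofReal_eq_zero, not_le]; linarith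
  have hct' : ENNReal.ofReal (1 - lam) ≠ ⊤ := ENNReal.ofReal_ne_top
  set S₁ := {E : ℝ≥0∞ | ∃ φ ψ : ℝ → ℝ, IsSqrtDensity μ φ ψ ∧
    E = ENNReal.ofReal ((1 / 2) * ∫ x in (0:ℝ)..(2 * Real.pi), (ψ x) ^ 2)} with hS₁
  set S₂ := {E : ℝ≥0∞ | ∃ φ ψ : ℝ → ℝ, IsSqrtDensity ν φ ψ ∧
    E = ENNReal.ofReal ((1 / 2) * ∫ x in (0:ℝ)..(2 * Real.pi), (ψ x) ^ 2)} with hS₂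
  have hr₁ : rateI μ = sInf S₁ := rfl
  have hr₂ : rateI ν = sInf S₂ := rfl
  rcases Set.eq_empty_or_nonempty S₁ with he | hne₁
  · rw [hr₁, he, _root_.sInf_empty, ENNReal.mul_top hc0, top_add]
    exact le_top
  rcases Set.eq_empty_or_nonempty S₂ with he | hne₂
  · rw [hr₂, he, _root_.sInf_empty, ENNReal.mul_top hc0', add_top]
    exact le_top
  have key : ∀ E₁ ∈ S₁, ∀ E₂ ∈ S₂,
      rateI (ENNReal.ofReal lam • μ + ENNReal.ofReal (1 - lam) • ν) ≤
        ENNReal.ofReal lam * E₁ + ENNReal.ofReal (1 - lam) * E₂ := by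
    rintro E₁ ⟨φ, ψ, hsd1, rfl⟩ E₂ ⟨χ, ω, hsd2, rfl⟩
    obtain ⟨σ, τ, hsd, hle⟩ := isSqrtDensity_combo h0 h1 hsd1 hsd2
    have r1 : (0:ℝ) ≤ ∫ x in (0:ℝ)..(2 * Real.pi), (ψ x) ^ 2 :=
      intervalIntegral.integral_nonneg hT.le fun u _ => sq_nonneg _
    have r2 : (0:ℝ) ≤ ∫ x in (0:ℝ)..(2 * Real.pi), (ω x) ^ 2 :=
      intervalIntegral.integral_nonneg hT.le fun u _ => sq_nonneg _
    calc rateI (ENNReal.ofReal lam • μ + ENNReal.ofReal (1 - lam) • ν)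
        ≤ ENNReal.ofReal ((1 / 2) * ∫ x in (0:ℝ)..(2 * Real.pi), (τ x) ^ 2) :=
          sInf_le ⟨σ, τ, hsd, rfl⟩
      _ ≤ ENNReal.ofReal (lam * ((1 / 2) * ∫ x in (0:ℝ)..(2 * Real.pi), (ψ x) ^ 2)
            + (1 - lam) * ((1 / 2) * ∫ x in (0:ℝ)..(2 * Real.pi), (ω x) ^ 2)) :=
          ENNReal.ofReal_le_ofReal (by linarith)
      _ = ENNReal.ofReal lam *
            ENNReal.ofReal ((1 / 2) * ∫ x in (0:ℝ)..(2 * Real.pi), (ψ x) ^ 2)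
          + ENNReal.ofReal (1 - lam) *
            ENNReal.ofReal ((1 / 2) * ∫ x in (0:ℝ)..(2 * Real.pi), (ω x) ^ 2) := by
          rw [ENNReal.ofReal_add (mul_nonneg h0 (by linarith)) (mul_nonneg h1' (by linarith)),
            ENNReal.ofReal_mul h0, ENNReal.ofReal_mul h1']
  rw [hr₁, hr₂]
  calc rateI (ENNReal.ofReal lam • μ + ENNReal.ofReal (1 - lam) • ν)
      ≤ ⨅ (E₁ : S₁), ⨅ (E₂ : S₂), (ENNReal.ofReal lam * E₁ + ENNReal.ofReal (1 - lam) * E₂) :=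
        le_iInf fun E₁ => le_iInf fun E₂ => key E₁.1 E₁.2 E₂.1 E₂.2
    _ = ENNReal.ofReal lam * sInf S₁ + ENNReal.ofReal (1 - lam) * sInf S₂ := by
        rw [sInf_eq_iInf', sInf_eq_iInf', ENNReal.mul_iInf_of_ne hc0 hct,
          ENNReal.mul_iInf_of_ne hc0' hct', ENNReal.iInf_add]
        exact iInf_congr fun E₁ => ENNReal.add_iInf.symm
end

section
/- Let $\phi : S^1 \to \mathbb{R}$ be a $C^2$ function with $\phi > 0$, and let $v : S^1 \to \mathbb{R}$ be $C^2$ with $v > 0$. Then $\int_{S^1} \frac{(v\phi)''}{2(v\phi)}\,\phi^2\,d\zeta = -\frac12\int_{S^1} |\phi'|^2\,d\zeta + \frac12 \int_{S^1} \frac{\phi^2 (v')^2}{v^2}\,d\zeta$, and in particular $\int_{S^1} \frac{(v\phi)''}{2(v\phi)}\,\phi^2\,d\zeta \ge -\frac12\int_{S^1}|\phi'|^2\,d\zeta$. -/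
open Real intervalIntegral

private lemma periodic_deriv'' (f : ℝ → ℝ) {c : ℝ} (h : Function.Periodic f c) :
    Function.Periodic (deriv f) c := fun x => by
  rw [← deriv_comp_add_const]
  congr 1
  ext y
  exact h y

/-- Integration by parts identity on the circle (identified with `ℝ/2πℤ`):
for positive `C²` functions `φ, v`,
`∫ (vφ)''/(2vφ) · φ² = -½∫ (φ')² + ½∫ φ²(v')²/v²`, and in particular the
left-hand side is at least `-½∫ (φ')²`. -/
theorem circle_ibp_identity (φ v : ℝ → ℝ)
    (hφper : Function.Periodic φ (2 * Real.pi)) (hvper : Function.Periodic v (2 * Real.pi))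
    (hφ : ContDiff ℝ 2 φ) (hv : ContDiff ℝ 2 v)
    (hφpos : ∀ x, 0 < φ x) (hvpos : ∀ x, 0 < v x) :
    (∫ x in (0:ℝ)..(2 * Real.pi),
        deriv (deriv (fun y => v y * φ y)) x / (2 * (v x * φ x)) * (φ x) ^ 2)
      = -(1 / 2) * (∫ x in (0:ℝ)..(2 * Real.pi), (deriv φ x) ^ 2)
        + (1 / 2) * (∫ x in (0:ℝ)..(2 * Real.pi), (φ x) ^ 2 * (deriv v x) ^ 2 / (v x) ^ 2) ∧
    -(1 / 2) * (∫ x in (0:ℝ)..(2 * Real.pi), (deriv φ x) ^ 2) ≤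
      ∫ x in (0:ℝ)..(2 * Real.pi),
        deriv (deriv (fun y => v y * φ y)) x / (2 * (v x * φ x)) * (φ x) ^ 2 := by
  have hφ' : ContDiff ℝ (1 + 1) φ := by norm_num; exact hφ
  have hv' : ContDiff ℝ (1 + 1) v := by norm_num; exact hv
  obtain ⟨hφd, -, hφ1⟩ := contDiff_succ_iff_deriv.mp hφ'
  obtain ⟨hφd', hφ''c⟩ := contDiff_one_iff_deriv.mp hφ1
  obtain ⟨hvd, -, hv1⟩ := contDiff_succ_iff_deriv.mp hv'
  obtain ⟨hvd', hv''c⟩ := contDiff_one_iff_deriv.mp hv1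
  have hv0 : ∀ x, v x ≠ 0 := fun x => (hvpos x).ne'
  have hφ0 : ∀ x, φ x ≠ 0 := fun x => (hφpos x).ne'
  have cv := hv.continuous
  have cφ := hφ.continuous
  have cv' := hv1.continuous
  have cφ' := hφ1.continuous
  -- first derivative of the product
  have hvφ : deriv (fun y => v y * φ y) = fun x => deriv v x * φ x + v x * deriv φ x :=
    funext fun x => ((hvd x).hasDerivAt.mul (hφd x).hasDerivAt).deriv
  -- second derivative of the product
  have hD2 : ∀ x, deriv (deriv (fun y => v y * φ y)) x
      = deriv (deriv v) x * φ x + 2 * (deriv v x * deriv φ x) + v x * deriv (deriv φ) x := by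
    intro x
    rw [hvφ]
    have h1 : HasDerivAt (fun y => deriv v y * φ y + v y * deriv φ y)
        ((deriv (deriv v) x * φ x + deriv v x * deriv φ x)
          + (deriv v x * deriv φ x + v x * deriv (deriv φ) x)) x :=
      ((hvd' x).hasDerivAt.mul (hφd x).hasDerivAt).add
        ((hvd x).hasDerivAt.mul (hφd' x).hasDerivAt)
    rw [h1.deriv]; ring
  -- auxiliary function and its derivative
  set F : ℝ → ℝ := fun x => deriv v x / v x * (φ x * φ x) + φ x * deriv φ x with hFdef
  set F' : ℝ → ℝ := fun x =>
    (deriv (deriv v) x * v x - deriv v x * deriv v x) / (v x) ^ 2 * (φ x * φ x)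
      + deriv v x / v x * (deriv φ x * φ x + φ x * deriv φ x)
      + (deriv φ x * deriv φ x + φ x * deriv (deriv φ) x) with hF'def
  have hF : ∀ x, HasDerivAt F (F' x) x := fun x =>
    (((hvd' x).hasDerivAt.div (hvd x).hasDerivAt (hv0 x)).mul
        ((hφd x).hasDerivAt.mul (hφd x).hasDerivAt)).add
      ((hφd x).hasDerivAt.mul (hφd' x).hasDerivAt)
  have cF' : Continuous F' := by
    refine Continuous.add (Continuous.add ?_ ?_) ?_
    · exact (((hv''c.mul cv).sub (cv'.mul cv')).div (cv.pow 2)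
        fun x => pow_ne_zero 2 (hv0 x)).mul (cφ.mul cφ)
    · exact (cv'.div cv hv0).mul ((cφ'.mul cφ).add (cφ.mul cφ'))
    · exact (cφ'.mul cφ').add (cφ.mul hφ''c)
  -- pointwise identity
  have hpt : ∀ x, deriv (deriv (fun y => v y * φ y)) x / (2 * (v x * φ x)) * (φ x) ^ 2
      = (1 / 2) * F' x
        + ((1 / 2) * ((φ x) ^ 2 * (deriv v x) ^ 2 / (v x) ^ 2)
          - (1 / 2) * (deriv φ x) ^ 2) := by
    intro x
    rw [hD2 x, hF'def]
    have h1 := hv0 x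
    have h2 := hφ0 x
    field_simp
    ring
  -- F is (2π)-periodic at the endpoints
  have hFper : F (2 * Real.pi) = F 0 := by
    have e1 : φ (2 * Real.pi) = φ 0 := by simpa using hφper 0
    have e2 : v (2 * Real.pi) = v 0 := by simpa using hvper 0
    have e3 : deriv φ (2 * Real.pi) = deriv φ 0 := by simpa using periodic_deriv'' φ hφper 0
    have e4 : deriv v (2 * Real.pi) = deriv v 0 := by simpa using periodic_deriv'' v hvper 0
    simp [hFdef, e1, e2, e3, e4]
  -- integrability of the pieces
  have int1 : IntervalIntegrable (fun x => (1 / 2 : ℝ) * F' x) MeasureTheory.volume 0 (2 * Real.pi) :=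
    (continuous_const.mul cF').intervalIntegrable _ _
  have cg1 : Continuous (fun x => (φ x) ^ 2 * (deriv v x) ^ 2 / (v x) ^ 2) :=
    ((cφ.pow 2).mul (cv'.pow 2)).div (cv.pow 2) fun x => pow_ne_zero 2 (hv0 x)
  have cg2 : Continuous (fun x => (deriv φ x) ^ 2) := cφ'.pow 2
  have int2 : IntervalIntegrable
      (fun x => (1 / 2) * ((φ x) ^ 2 * (deriv v x) ^ 2 / (v x) ^ 2)
        - (1 / 2) * (deriv φ x) ^ 2) MeasureTheory.volume 0 (2 * Real.pi) :=
    ((continuous_const.mul cg1).sub (continuous_const.mul cg2)).intervalIntegrable _ _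
  have key : (∫ x in (0:ℝ)..(2 * Real.pi),
      deriv (deriv (fun y => v y * φ y)) x / (2 * (v x * φ x)) * (φ x) ^ 2)
      = -(1 / 2) * (∫ x in (0:ℝ)..(2 * Real.pi), (deriv φ x) ^ 2)
        + (1 / 2) * (∫ x in (0:ℝ)..(2 * Real.pi), (φ x) ^ 2 * (deriv v x) ^ 2 / (v x) ^ 2) := by
    have e0 : (∫ x in (0:ℝ)..(2 * Real.pi),
        deriv (deriv (fun y => v y * φ y)) x / (2 * (v x * φ x)) * (φ x) ^ 2)
        = ∫ x in (0:ℝ)..(2 * Real.pi),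
          ((1 / 2) * F' x
            + ((1 / 2) * ((φ x) ^ 2 * (deriv v x) ^ 2 / (v x) ^ 2)
              - (1 / 2) * (deriv φ x) ^ 2)) :=
      intervalIntegral.integral_congr fun x _ => hpt x
    rw [e0, intervalIntegral.integral_add int1 int2, intervalIntegral.integral_sub
        ((show Continuous (fun x => (1 / 2 : ℝ) * ((φ x) ^ 2 * (deriv v x) ^ 2 / (v x) ^ 2)) from
          continuous_const.mul cg1).intervalIntegrable _ _)
        ((show Continuous (fun x => (1 / 2 : ℝ) * (deriv φ x) ^ 2) from
          continuous_const.mul cg2).intervalIntegrable _ _),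
      intervalIntegral.integral_const_mul, intervalIntegral.integral_const_mul,
      intervalIntegral.integral_const_mul,
      intervalIntegral.integral_eq_sub_of_hasDerivAt (fun x _ => hF x)
        (cF'.intervalIntegrable _ _), hFper]
    ring
  refine ⟨key, ?_⟩
  rw [key]
  have hnn : 0 ≤ ∫ x in (0:ℝ)..(2 * Real.pi), (φ x) ^ 2 * (deriv v x) ^ 2 / (v x) ^ 2 := by
    apply intervalIntegral.integral_nonneg (by positivity)
    intro x _
    positivity
  nlinarith
end
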